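/- Let k ≥ 1 and let α be a positive real number. Then for every t ∈ [1,∞), k^{(1−t)/k} e^{(1−t)(kγ−γ)/k} Γ(α+1)/Γ_k(α+1) ≤ Γ(α+t)/Γ_k(α+t). -/

import Mathlib

open Real

/-- The k-Gamma function `Γ_k(t) = ∫₀^∞ e^{-x^k/k} x^{t-1} dx`. -/
noncomputable def gammak (k t : ℝ) : ℝ :=
  ∫ x in Set.Ioi (0 : ℝ), Real.exp (-(x ^ k) / k) * x ^ (t - 1)

open MeasureTheory Filter Topology Finset in
lemma gammak_eq {k t : ℝ} (hk : 0 < k) (ht : 0 < t) :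
    gammak k t = k ^ (t / k - 1) * Real.Gamma (t / k) := by
  have h1 : gammak k t
      = ∫ x in Set.Ioi (0:ℝ), (k * x ^ (k - 1)) •
          (Real.exp (-(x ^ k) / k) * (x ^ k) ^ (t / k - 1) * k⁻¹) := by
    rw [gammak]
    refine setIntegral_congr_fun measurableSet_Ioi (fun x hx => ?_)
    have hx : (0:ℝ) < x := hx
    have e1 : (x ^ k) ^ (t / k - 1) = x ^ (t - k) := by
      rw [← Real.rpow_mul hx.le]
      congr 1
      field_simp
    rw [smul_eq_mul, e1]
    have e2 : x ^ (k - 1) * x ^ (t - k) = x ^ (t - 1) := by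
      rw [← Real.rpow_add hx]; congr 1; ring
    field_simp
    exact e2.symm
  rw [h1, MeasureTheory.integral_comp_rpow_Ioi_of_pos
    (g := fun y => Real.exp (-y / k) * y ^ (t / k - 1) * k⁻¹) hk]
  have h2 : (∫ y in Set.Ioi (0:ℝ), Real.exp (-y / k) * y ^ (t / k - 1) * k⁻¹)
      = k • ∫ x in Set.Ioi (0:ℝ),
          Real.exp (-(k*x) / k) * (k*x) ^ (t / k - 1) * k⁻¹ := by
    rw [MeasureTheory.integral_comp_mul_left_Ioi
      (fun y => Real.exp (-y / k) * y ^ (t / k - 1) * k⁻¹) 0 hk, mul_zero,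
      smul_smul, mul_inv_cancel₀ hk.ne', one_smul]
  rw [h2]
  have h3 : (∫ x in Set.Ioi (0:ℝ), Real.exp (-(k*x) / k) * (k*x) ^ (t / k - 1) * k⁻¹)
      = (k ^ (t/k - 1) * k⁻¹) * ∫ x in Set.Ioi (0:ℝ), Real.exp (-x) * x ^ (t / k - 1) := by
    rw [← integral_const_mul]
    refine setIntegral_congr_fun measurableSet_Ioi (fun x hx => ?_)
    have hx : (0:ℝ) < x := hx
    have e : -(k * x) / k = -x := by field_simp
    rw [Real.mul_rpow hk.le hx.le, e]
    ring
  rw [h3, ← Real.Gamma_eq_integral (div_pos ht hk), smul_eq_mul]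
  field_simp

lemma term_ineq {k x y : ℝ} (hk : 1 ≤ k) (hy : 0 ≤ y) (hxy : y ≤ x) {j : ℝ} (hj : 1 ≤ j) :
    (x + j) * (y / k + j) ≤
      Real.exp ((1 - 1 / k) * (x - y) / j) * ((y + j) * (x / k + j)) := by
  have hk0 : (0:ℝ) < k := lt_of_lt_of_le one_pos hk
  have hj0 : (0:ℝ) < j := lt_of_lt_of_le one_pos hj
  have hk1 : 1/k ≤ 1 := by rw [div_le_one hk0]; exact hk
  have hc : 0 ≤ (1 - 1/k) * (x - y) / j :=
    div_nonneg (mul_nonneg (by linarith) (by linarith)) hj0.le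
  have hexp : 1 + (1 - 1/k) * (x - y) / j ≤ Real.exp ((1 - 1/k) * (x - y) / j) := by
    rw [add_comm]; exact Real.add_one_le_exp _
  have hyj : (0:ℝ) < y + j := by linarith
  have hxkj : (0:ℝ) < x / k + j := by
    have := div_nonneg (hy.trans hxy) hk0.le; linarith
  have key : (x + j) * (y / k + j) ≤
      (1 + (1 - 1/k) * (x - y) / j) * ((y + j) * (x / k + j)) := by
    have hbig : k * j ^ 2 ≤ (y + j) * (x + j * k) := by nlinarith [mul_nonneg hy (hy.trans hxy), mul_nonneg hj0.le (hy.trans hxy), mul_nonneg (mul_nonneg hj0.le hk0.le) hy]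
    have hnn : 0 ≤ (1 - 1/k) * (x - y) := mul_nonneg (by linarith) (by linarith)
    have h5 : (1 - 1/k) * (x - y) / j * (k * j ^ 2)
        ≤ (1 - 1/k) * (x - y) / j * ((y + j) * (x + j * k)) :=
      mul_le_mul_of_nonneg_left hbig (div_nonneg hnn hj0.le)
    have h6 : (1 - 1/k) * (x - y) / j * (k * j ^ 2) = j * (k - 1) * (x - y) := by
      field_simp
    have h7 : (y + j) * (x + j * k) - (x + j) * (y + j * k) = -(j * (k - 1) * (x - y)) := by
      ring
    have hineq : (x + j) * (y + j * k) ≤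
        (1 + (1 - 1/k) * (x - y) / j) * ((y + j) * (x + j * k)) := by nlinarith [h5, h6, h7]
    calc (x + j) * (y / k + j) = (x + j) * (y + j * k) / k := by field_simp
      _ ≤ (1 + (1 - 1/k) * (x - y) / j) * ((y + j) * (x + j * k)) / k := by gcongr
      _ = (1 + (1 - 1/k) * (x - y) / j) * ((y + j) * (x / k + j)) := by field_simp
  calc (x + j) * (y / k + j) ≤ (1 + (1 - 1/k) * (x - y) / j) * ((y + j) * (x / k + j)) := key
    _ ≤ Real.exp ((1 - 1/k) * (x - y) / j) * ((y + j) * (x / k + j)) :=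
        mul_le_mul_of_nonneg_right hexp (by positivity)

open Finset in
lemma prod_ineq {k x y : ℝ} (hk : 1 ≤ k) (hy : 0 ≤ y) (hxy : y ≤ x) (n : ℕ) :
    (∏ j ∈ range (n+1), (x + j)) * (∏ j ∈ range (n+1), (y/k + j)) ≤
    Real.exp ((1 - 1/k) * (x - y) * (harmonic n : ℝ)) *
      ((∏ j ∈ range (n+1), (y + j)) * (∏ j ∈ range (n+1), (x/k + j))) := by
  have hk0 : (0:ℝ) < k := lt_of_lt_of_le one_pos hk
  have hx : 0 ≤ x := hy.trans hxy
  have hH : ((harmonic n : ℝ)) = ∑ i ∈ range n, (((i:ℝ)+1))⁻¹ := by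
    rw [harmonic]
    push_cast
    rfl
  have hexp : Real.exp ((1 - 1/k) * (x - y) * (harmonic n : ℝ))
      = ∏ i ∈ range n, Real.exp ((1 - 1/k) * (x - y) * ((i:ℝ)+1)⁻¹) := by
    rw [hH, Finset.mul_sum, Real.exp_sum]
  have hL : (∏ j ∈ range (n+1), (x + j)) * (∏ j ∈ range (n+1), (y/k + j))
      = (x * (y/k)) * ∏ i ∈ range n, ((x + ((i:ℝ)+1)) * (y/k + ((i:ℝ)+1))) := by
    rw [Finset.prod_range_succ' (fun j : ℕ => (x + (j:ℝ))),
        Finset.prod_range_succ' (fun j : ℕ => (y/k + (j:ℝ))), Finset.prod_mul_distrib]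
    push_cast
    ring
  have hR : (∏ j ∈ range (n+1), (y + j)) * (∏ j ∈ range (n+1), (x/k + j))
      = (x * (y/k)) * ∏ i ∈ range n, ((y + ((i:ℝ)+1)) * (x/k + ((i:ℝ)+1))) := by
    rw [Finset.prod_range_succ' (fun j : ℕ => (y + (j:ℝ))),
        Finset.prod_range_succ' (fun j : ℕ => (x/k + (j:ℝ))), Finset.prod_mul_distrib]
    push_cast
    field_simp
    ring
  have hprod : (∏ i ∈ range n, ((x + ((i:ℝ)+1)) * (y/k + ((i:ℝ)+1))))
      ≤ ∏ i ∈ range n, (Real.exp ((1 - 1/k) * (x - y) * ((i:ℝ)+1)⁻¹) *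
          ((y + ((i:ℝ)+1)) * (x/k + ((i:ℝ)+1)))) := by
    refine Finset.prod_le_prod (fun i _ => by positivity) (fun i _ => ?_)
    have h1 : (1:ℝ) ≤ (i:ℝ) + 1 := by
      have := Nat.cast_nonneg (α := ℝ) i
      linarith
    have := term_ineq hk hy hxy h1
    rwa [div_eq_mul_inv] at this
  rw [hL, hexp, hR]
  calc x * (y/k) * ∏ i ∈ range n, ((x + ((i:ℝ)+1)) * (y/k + ((i:ℝ)+1)))
      ≤ x * (y/k) * ∏ i ∈ range n, (Real.exp ((1 - 1/k) * (x - y) * ((i:ℝ)+1)⁻¹) *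
          ((y + ((i:ℝ)+1)) * (x/k + ((i:ℝ)+1)))) :=
        mul_le_mul_of_nonneg_left hprod (by positivity)
    _ = (∏ i ∈ range n, Real.exp ((1 - 1/k) * (x - y) * ((i:ℝ)+1)⁻¹)) *
          (x * (y/k) * ∏ i ∈ range n, ((y + ((i:ℝ)+1)) * (x/k + ((i:ℝ)+1)))) := by
        rw [Finset.prod_mul_distrib]
        ring

open Finset in
lemma seq_ineq {k x y : ℝ} (hk : 1 ≤ k) (hy0 : 0 < y) (hxy : y ≤ x) {n : ℕ} (hn : 1 ≤ n) :
    Real.GammaSeq y n * Real.GammaSeq (x/k) n ≤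
      Real.exp ((1 - 1/k) * (x - y) * ((harmonic n : ℝ) - Real.log n)) *
        (Real.GammaSeq x n * Real.GammaSeq (y/k) n) := by
  have hk0 : (0:ℝ) < k := lt_of_lt_of_le one_pos hk
  have hx0 : (0:ℝ) < x := hy0.trans_le hxy
  have hN : (0:ℝ) < (n:ℝ) := by exact_mod_cast hn
  set c : ℝ := (1 - 1/k) * (x - y) with hc
  have hsplit : Real.exp (c * ((harmonic n : ℝ) - Real.log n))
      = Real.exp (c * (harmonic n : ℝ)) * (n:ℝ) ^ (-c) := by
    rw [Real.rpow_def_of_pos hN, ← Real.exp_add]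
    congr 1
    ring
  have hPx : (0:ℝ) < ∏ j ∈ range (n+1), (x + (j:ℝ)) :=
    Finset.prod_pos (fun j _ => by positivity)
  have hPy : (0:ℝ) < ∏ j ∈ range (n+1), (y + (j:ℝ)) :=
    Finset.prod_pos (fun j _ => by positivity)
  have hPxk : (0:ℝ) < ∏ j ∈ range (n+1), (x/k + (j:ℝ)) :=
    Finset.prod_pos (fun j _ => by positivity)
  have hPyk : (0:ℝ) < ∏ j ∈ range (n+1), (y/k + (j:ℝ)) :=
    Finset.prod_pos (fun j _ => by positivity)
  have hfact : (0:ℝ) < (n.factorial : ℝ) := by exact_mod_cast Nat.factorial_pos n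
  rw [Real.GammaSeq, Real.GammaSeq, Real.GammaSeq, Real.GammaSeq, hsplit]
  rw [div_mul_div_comm, div_mul_div_comm]
  have epow : (n:ℝ) ^ (-c) * ((n:ℝ) ^ x * (n:ℝ) ^ (y/k)) = (n:ℝ) ^ y * (n:ℝ) ^ (x/k) := by
    rw [← Real.rpow_add hN, ← Real.rpow_add hN, ← Real.rpow_add hN]
    congr 1
    ring
  rw [← mul_div_assoc, div_le_div_iff₀ (by positivity) (by positivity)]
  have key := prod_ineq hk hy0.le hxy n
  calc (n:ℝ) ^ y * (n.factorial : ℝ) * ((n:ℝ) ^ (x/k) * (n.factorial : ℝ)) *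
        ((∏ j ∈ range (n+1), (x + (j:ℝ))) * (∏ j ∈ range (n+1), (y/k + (j:ℝ))))
      ≤ (n:ℝ) ^ y * (n.factorial : ℝ) * ((n:ℝ) ^ (x/k) * (n.factorial : ℝ)) *
        (Real.exp (c * (harmonic n : ℝ)) *
          ((∏ j ∈ range (n+1), (y + (j:ℝ))) * (∏ j ∈ range (n+1), (x/k + (j:ℝ))))) := by
        refine mul_le_mul_of_nonneg_left key (by positivity)
    _ = Real.exp (c * (harmonic n : ℝ)) * ((n:ℝ) ^ (-c) * ((n:ℝ) ^ x * (n:ℝ) ^ (y/k))) *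
          (n.factorial : ℝ) * (n.factorial : ℝ) *
        ((∏ j ∈ range (n+1), (y + (j:ℝ))) * (∏ j ∈ range (n+1), (x/k + (j:ℝ)))) := by
        rw [epow]; ring
    _ = Real.exp (c * (harmonic n : ℝ)) * (n:ℝ) ^ (-c) * ((n:ℝ) ^ x * (n.factorial : ℝ) *
          ((n:ℝ) ^ (y/k) * (n.factorial : ℝ))) *
        ((∏ j ∈ range (n+1), (y + (j:ℝ))) * (∏ j ∈ range (n+1), (x/k + (j:ℝ)))) := by
        ring

open Filter Topology in
lemma gamma_key {k x y : ℝ} (hk : 1 ≤ k) (hy : 0 < y) (hxy : y ≤ x) :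
    Real.Gamma y * Real.Gamma (x/k) ≤
      Real.exp ((1 - 1/k) * (x - y) * Real.eulerMascheroniConstant) *
        (Real.Gamma x * Real.Gamma (y/k)) := by
  have hA : Tendsto (fun n : ℕ => Real.GammaSeq y n * Real.GammaSeq (x/k) n) atTop
      (𝓝 (Real.Gamma y * Real.Gamma (x/k))) :=
    (Real.GammaSeq_tendsto_Gamma y).mul (Real.GammaSeq_tendsto_Gamma (x/k))
  have hB : Tendsto (fun n : ℕ =>
      Real.exp ((1 - 1/k) * (x - y) * ((harmonic n : ℝ) - Real.log n)) *
        (Real.GammaSeq x n * Real.GammaSeq (y/k) n)) atTop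
      (𝓝 (Real.exp ((1 - 1/k) * (x - y) * Real.eulerMascheroniConstant) *
        (Real.Gamma x * Real.Gamma (y/k)))) := by
    refine Tendsto.mul ?_
      ((Real.GammaSeq_tendsto_Gamma x).mul (Real.GammaSeq_tendsto_Gamma (y/k)))
    exact (Real.tendsto_harmonic_sub_log.const_mul _).rexp
  refine le_of_tendsto_of_tendsto hA hB ?_
  filter_upwards [eventually_ge_atTop 1] with n hn
  exact seq_ineq hk hy hxy hn

theorem W_lower_bound_ge_one (k : ℝ) (hk : 1 ≤ k) (α : ℝ) (hα : 0 < α)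
    (t : ℝ) (ht : t ∈ Set.Ici (1 : ℝ)) :
    k ^ ((1 - t) / k) *
        Real.exp ((1 - t) * (k * eulerMascheroniConstant - eulerMascheroniConstant) / k) *
          Real.Gamma (α + 1) / gammak k (α + 1) ≤
      Real.Gamma (α + t) / gammak k (α + t) := by
  have hk0 : (0:ℝ) < k := lt_of_lt_of_le one_pos hk
  have ht1 : (1:ℝ) ≤ t := ht
  have hy0 : (0:ℝ) < α + 1 := by linarith
  have hx0 : (0:ℝ) < α + t := by linarith
  have hyk : 0 < (α + 1)/k := div_pos hy0 hk0
  have hxk : 0 < (α + t)/k := div_pos hx0 hk0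
  have hGyk := Real.Gamma_pos_of_pos hyk
  have hGxk := Real.Gamma_pos_of_pos hxk
  rw [gammak_eq hk0 hy0, gammak_eq hk0 hx0,
    div_le_div_iff₀ (mul_pos (Real.rpow_pos_of_pos hk0 _) hGyk)
      (mul_pos (Real.rpow_pos_of_pos hk0 _) hGxk)]
  set γ := Real.eulerMascheroniConstant with hγ
  set c : ℝ := (1 - 1/k) * ((α + t) - (α + 1)) with hc
  have hE : (1 - t) * (k * γ - γ) / k = -(c * γ) := by
    rw [hc]; field_simp; ring
  have hpow : k ^ ((1 - t)/k) * k ^ ((α + t)/k - 1) = k ^ ((α + 1)/k - 1) := by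
    rw [← Real.rpow_add hk0]; congr 1; ring
  have key : Real.Gamma (α + 1) * Real.Gamma ((α + t)/k) ≤
      Real.exp (c * γ) * (Real.Gamma (α + t) * Real.Gamma ((α + 1)/k)) :=
    gamma_key hk hy0 (by linarith)
  calc k ^ ((1 - t)/k) * Real.exp ((1 - t) * (k * γ - γ) / k) * Real.Gamma (α + 1) *
        (k ^ ((α + t)/k - 1) * Real.Gamma ((α + t)/k))
      = k ^ ((α + 1)/k - 1) * Real.exp (-(c * γ)) *
          (Real.Gamma (α + 1) * Real.Gamma ((α + t)/k)) := by
        rw [hE, ← hpow]; ring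
    _ ≤ k ^ ((α + 1)/k - 1) * Real.exp (-(c * γ)) *
          (Real.exp (c * γ) * (Real.Gamma (α + t) * Real.Gamma ((α + 1)/k))) :=
        mul_le_mul_of_nonneg_left key (by positivity)
    _ = Real.Gamma (α + t) * (k ^ ((α + 1)/k - 1) * Real.Gamma ((α + 1)/k)) := by
        have h1 : Real.exp (-(c * γ)) * Real.exp (c * γ) = 1 := by
          rw [← Real.exp_add, neg_add_cancel, Real.exp_zero]
        linear_combination (k ^ ((α + 1)/k - 1) *
          (Real.Gamma (α + t) * Real.Gamma ((α + 1)/k))) * h1
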